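/- Let A : [0,T] → M_n(ℝ) be continuous and Q₁, Q₂ : [0,T] → Sym_n(ℝ) continuous with Q₁(s) ≤ Q₂(s) for all s, and G₁ ≤ G₂ in Sym_n(ℝ) (Loewner order). If Γ₁, Γ₂ : [0,T] → Sym_n(ℝ) are C¹ and solve Γᵢ'(s) + Γᵢ(s)A(s) + A(s)ᵀΓᵢ(s) + Qᵢ(s) = 0 with Γᵢ(T) = Gᵢ, then Γ₁(s) ≤ Γ₂(s) for all s ∈ [0,T]. -/

import Mathlib

open Matrix Set

attribute [local instance] Matrix.normedAddCommGroup Matrix.normedSpace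

lemma aux_deriv {n : ℕ} (yf : ℝ → Fin n → ℝ) (w : Fin n → ℝ)
    (Mf : ℝ → Matrix (Fin n) (Fin n) ℝ) (M' : Matrix (Fin n) (Fin n) ℝ)
    (s : Set ℝ) (r : ℝ) (hy : HasDerivWithinAt yf w s r) (hM : HasDerivWithinAt Mf M' s r) :
    HasDerivWithinAt (fun r => yf r ⬝ᵥ (Mf r *ᵥ yf r))
      (w ⬝ᵥ (Mf r *ᵥ yf r) + (yf r ⬝ᵥ (M' *ᵥ yf r) + yf r ⬝ᵥ (Mf r *ᵥ w))) s r := by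
  have H : HasDerivWithinAt (fun r => ∑ i, ∑ j, yf r i * (Mf r i j * yf r j))
      (∑ i, ∑ j, (w i * (Mf r i j * yf r j) + yf r i * (M' i j * yf r j + Mf r i j * w j)))
      s r := by
    refine HasDerivWithinAt.fun_sum fun i _ => HasDerivWithinAt.fun_sum fun j _ => ?_
    exact (hasDerivWithinAt_pi.1 hy i).mul
      ((hasDerivWithinAt_pi.1 (hasDerivWithinAt_pi.1 hM i) j).mul (hasDerivWithinAt_pi.1 hy j))
  convert H using 1
  · funext r
    simp [dotProduct, mulVec, Finset.mul_sum]
  · simp [dotProduct, mulVec, Finset.mul_sum, Finset.sum_add_distrib, mul_add]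

lemma aux_mulVec_norm {n : ℕ} (B : Matrix (Fin n) (Fin n) ℝ) (v : Fin n → ℝ) :
    ‖B *ᵥ v‖ ≤ (n * ‖B‖) * ‖v‖ := by
  have h0 : (0:ℝ) ≤ (n * ‖B‖) * ‖v‖ := by positivity
  rw [pi_norm_le_iff_of_nonneg h0]
  intro i
  calc ‖(B *ᵥ v) i‖ = ‖∑ j, B i j * v j‖ := by simp [mulVec, dotProduct]
    _ ≤ ∑ j, ‖B i j * v j‖ := norm_sum_le _ _
    _ ≤ ∑ j : Fin n, ‖B‖ * ‖v‖ := by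
        refine Finset.sum_le_sum fun j _ => ?_
        rw [norm_mul]
        exact mul_le_mul (norm_entry_le_entrywise_sup_norm B) (norm_le_pi_norm v j)
          (norm_nonneg _) (norm_nonneg _)
    _ = (n * ‖B‖) * ‖v‖ := by simp [mul_assoc]

lemma aux_exists_sol {n : ℕ} (A : ℝ → Matrix (Fin n) (Fin n) ℝ) (K : ℝ) (hK : 1 ≤ K)
    (s t : ℝ) (hst : s ≤ t) (hts : t - s ≤ 1 / (2 * K))
    (hA : ContinuousOn A (Icc s t))
    (hbound : ∀ r ∈ Icc s t, ∀ v : Fin n → ℝ, ‖A r *ᵥ v‖ ≤ K * ‖v‖)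
    (x : Fin n → ℝ) :
    ∃ y : ℝ → Fin n → ℝ, y s = x ∧
      ∀ r ∈ Icc s t, HasDerivWithinAt y (A r *ᵥ y r) (Icc s t) r := by
  have hK0 : (0:ℝ) < K := by linarith
  have hpl : IsPicardLindelof (fun r (v : Fin n → ℝ) => A r *ᵥ v) (⟨s, left_mem_Icc.2 hst⟩ : Icc s t) x
      (‖x‖ + 1).toNNReal 0 (K * (2 * ‖x‖ + 1)).toNNReal K.toNNReal := by
    refine ⟨?_, ?_, ?_, ?_⟩
    · intro r hr
      refine LipschitzWith.lipschitzOnWith ?_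
      refine LipschitzWith.of_dist_le_mul fun y z => ?_
      rw [dist_eq_norm, dist_eq_norm, ← Matrix.mulVec_sub]
      rw [Real.coe_toNNReal _ hK0.le]
      exact hbound r hr _
    · intro v _
      have hc : Continuous (fun M : Matrix (Fin n) (Fin n) ℝ => M *ᵥ v) := by
        refine continuous_pi fun i => ?_
        simp only [mulVec, dotProduct]
        exact continuous_finset_sum _ fun j _ =>
          (continuous_id.matrix_elem i j).mul continuous_const
      exact hc.comp_continuousOn hA
    · intro r hr v hv
      have h1 : ‖v‖ ≤ 2 * ‖x‖ + 1 := by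
        have := mem_closedBall_iff_norm.1 hv
        rw [Real.coe_toNNReal _ (by positivity)] at this
        have h2 : ‖v‖ ≤ ‖v - x‖ + ‖x‖ := by
          have := norm_sub_norm_le v x; linarith
        linarith
      rw [Real.coe_toNNReal _ (by positivity)]
      calc ‖A r *ᵥ v‖ ≤ K * ‖v‖ := hbound r hr v
        _ ≤ K * (2 * ‖x‖ + 1) := by nlinarith
    · simp only [NNReal.coe_zero, sub_zero]
      rw [Real.coe_toNNReal _ (by positivity), Real.coe_toNNReal _ (by positivity)]
      change _ * max (t - s) (s - s) ≤ _
      have hmax : max (t - s) (s - s) = t - s := by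
        rw [max_eq_left]; linarith
      rw [hmax]
      have hx0 := norm_nonneg x
      have h2 : K * (2 * ‖x‖ + 1) * (t - s) ≤ K * (2 * ‖x‖ + 1) * (1 / (2 * K)) := by
        refine mul_le_mul_of_nonneg_left hts (by positivity)
      have h3 : K * (2 * ‖x‖ + 1) * (1 / (2 * K)) = ‖x‖ + 1/2 := by
        field_simp
      linarith
  obtain ⟨y, hy0, hy⟩ := hpl.exists_eq_forall_mem_Icc_hasDerivWithinAt₀
  exact ⟨y, hy0, hy⟩

lemma aux_step {n : ℕ} (A Δ Δ' Rm : ℝ → Matrix (Fin n) (Fin n) ℝ) (K : ℝ) (hK : 1 ≤ K)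
    (s t : ℝ) (hst : s ≤ t) (hts : t - s ≤ 1 / (2 * K))
    (hA : ContinuousOn A (Icc s t))
    (hbound : ∀ r ∈ Icc s t, ∀ v : Fin n → ℝ, ‖A r *ᵥ v‖ ≤ K * ‖v‖)
    (hΔd : ∀ r ∈ Icc s t, HasDerivAt Δ (Δ' r) r)
    (hode : ∀ r ∈ Icc s t, Δ' r = -(Δ r * A r + (A r)ᵀ * Δ r + Rm r))
    (hRpos : ∀ r ∈ Icc s t, ∀ v : Fin n → ℝ, 0 ≤ v ⬝ᵥ (Rm r *ᵥ v))
    (hherm : (Δ s).IsHermitian) (ht : (Δ t).PosSemidef) : (Δ s).PosSemidef := by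
  refine Matrix.PosSemidef.of_dotProduct_mulVec_nonneg hherm fun x => ?_
  rw [star_trivial]
  obtain ⟨y, hy0, hy⟩ := aux_exists_sol A K hK s t hst hts hA hbound x
  set g : ℝ → ℝ := fun r => y r ⬝ᵥ (Δ r *ᵥ y r) with hg_def
  set gd : ℝ → ℝ := fun r => (A r *ᵥ y r) ⬝ᵥ (Δ r *ᵥ y r) +
      (y r ⬝ᵥ (Δ' r *ᵥ y r) + y r ⬝ᵥ (Δ r *ᵥ (A r *ᵥ y r))) with hgd_def
  have hg : ∀ r ∈ Icc s t, HasDerivWithinAt g (gd r) (Icc s t) r := fun r hr =>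
    aux_deriv y (A r *ᵥ y r) Δ (Δ' r) _ r (hy r hr) ((hΔd r hr).hasDerivWithinAt)
  have hgd_nonpos : ∀ r ∈ Icc s t, gd r ≤ 0 := by
    intro r hr
    have hcalc : gd r = -(y r ⬝ᵥ (Rm r *ᵥ y r)) := by
      rw [hgd_def]
      simp only [hode r hr, Matrix.neg_mulVec, Matrix.add_mulVec, dotProduct_neg,
        dotProduct_add, ← Matrix.mulVec_mulVec]
      have h1 : y r ⬝ᵥ ((A r)ᵀ *ᵥ (Δ r *ᵥ y r)) = (A r *ᵥ y r) ⬝ᵥ (Δ r *ᵥ y r) := by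
        rw [Matrix.dotProduct_mulVec, Matrix.vecMul_transpose]
      rw [h1]
      ring
    rw [hcalc, neg_nonpos]
    exact hRpos r hr (y r)
  have hcont : ContinuousOn g (Icc s t) := fun r hr => (hg r hr).continuousWithinAt
  have hanti : AntitoneOn g (Icc s t) := by
    refine antitoneOn_of_deriv_nonpos (convex_Icc s t) hcont ?_ ?_
    · intro r hr
      rw [interior_Icc] at hr
      exact (((hg r (Ioo_subset_Icc_self hr)).hasDerivAt
        (Icc_mem_nhds hr.1 hr.2)).differentiableAt).differentiableWithinAt
    · intro r hr
      rw [interior_Icc] at hr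
      rw [((hg r (Ioo_subset_Icc_self hr)).hasDerivAt (Icc_mem_nhds hr.1 hr.2)).deriv]
      exact hgd_nonpos r (Ioo_subset_Icc_self hr)
  have h1 : g t ≤ g s := hanti (left_mem_Icc.2 hst) (right_mem_Icc.2 hst) hst
  have h2 : 0 ≤ g t := by
    have := ht.dotProduct_mulVec_nonneg (y t)
    rwa [star_trivial] at this
  have h3 : g s = x ⬝ᵥ (Δ s *ᵥ x) := by rw [hg_def]; simp [hy0]
  linarith

theorem stmt3 {n : ℕ} (T : ℝ) (hT : 0 < T)
    (A : ℝ → Matrix (Fin n) (Fin n) ℝ)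
    (Q₁ Q₂ : ℝ → Matrix (Fin n) (Fin n) ℝ)
    (G₁ G₂ : Matrix (Fin n) (Fin n) ℝ)
    (hA : ContinuousOn A (Icc 0 T))
    (hQ₁ : ContinuousOn Q₁ (Icc 0 T)) (hQ₂ : ContinuousOn Q₂ (Icc 0 T))
    (hQ₁sym : ∀ s ∈ Icc 0 T, (Q₁ s).IsHermitian)
    (hQ₂sym : ∀ s ∈ Icc 0 T, (Q₂ s).IsHermitian)
    (hQle : ∀ s ∈ Icc 0 T, (Q₂ s - Q₁ s).PosSemidef)
    (hG₁ : G₁.IsHermitian) (hG₂ : G₂.IsHermitian) (hGle : (G₂ - G₁).PosSemidef)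
    (Γ₁ Γ₁' Γ₂ Γ₂' : ℝ → Matrix (Fin n) (Fin n) ℝ)
    (hΓ₁sym : ∀ s ∈ Icc 0 T, (Γ₁ s).IsHermitian)
    (hΓ₂sym : ∀ s ∈ Icc 0 T, (Γ₂ s).IsHermitian)
    (hd₁ : ∀ s ∈ Icc 0 T, HasDerivAt Γ₁ (Γ₁' s) s)
    (hd₂ : ∀ s ∈ Icc 0 T, HasDerivAt Γ₂ (Γ₂' s) s)
    (hΓ₁'cont : ContinuousOn Γ₁' (Icc 0 T)) (hΓ₂'cont : ContinuousOn Γ₂' (Icc 0 T))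
    (hode₁ : ∀ s ∈ Icc 0 T, Γ₁' s + Γ₁ s * A s + (A s)ᵀ * Γ₁ s + Q₁ s = 0)
    (hode₂ : ∀ s ∈ Icc 0 T, Γ₂' s + Γ₂ s * A s + (A s)ᵀ * Γ₂ s + Q₂ s = 0)
    (hterm₁ : Γ₁ T = G₁) (hterm₂ : Γ₂ T = G₂) :
    ∀ s ∈ Icc 0 T, (Γ₂ s - Γ₁ s).PosSemidef := by
  obtain ⟨M, hM⟩ := isCompact_Icc.exists_bound_of_continuousOn hA
  set K : ℝ := n * max M 0 + 1 with hK_def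
  have hK : 1 ≤ K := by
    have : (0:ℝ) ≤ n * max M 0 := by positivity
    linarith
  have hbound : ∀ r ∈ Icc 0 T, ∀ v : Fin n → ℝ, ‖A r *ᵥ v‖ ≤ K * ‖v‖ := by
    intro r hr v
    refine (aux_mulVec_norm (A r) v).trans ?_
    refine mul_le_mul_of_nonneg_right ?_ (norm_nonneg _)
    have h1 : ‖A r‖ ≤ max M 0 := le_trans (hM r hr) (le_max_left _ _)
    have h2 : (n:ℝ) * ‖A r‖ ≤ n * max M 0 := by
      refine mul_le_mul_of_nonneg_left h1 (by positivity)
    linarith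
  set δ : ℝ := 1 / (2 * K) with hδ_def
  have hδ : 0 < δ := by positivity
  have hode : ∀ r ∈ Icc 0 T, Γ₂' r - Γ₁' r =
      -((Γ₂ r - Γ₁ r) * A r + (A r)ᵀ * (Γ₂ r - Γ₁ r) + (Q₂ r - Q₁ r)) := by
    intro r hr
    have h1 := hode₁ r hr
    have h2 := hode₂ r hr
    have e1 : Γ₁' r = -(Γ₁ r * A r + (A r)ᵀ * Γ₁ r + Q₁ r) := by
      rw [eq_neg_iff_add_eq_zero, ← h1]; abel
    have e2 : Γ₂' r = -(Γ₂ r * A r + (A r)ᵀ * Γ₂ r + Q₂ r) := by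
      rw [eq_neg_iff_add_eq_zero, ← h2]; abel
    rw [e1, e2, sub_mul, mul_sub]
    abel
  have step : ∀ s t : ℝ, s ∈ Icc 0 T → t ∈ Icc 0 T → s ≤ t → t - s ≤ δ →
      (Γ₂ t - Γ₁ t).PosSemidef → (Γ₂ s - Γ₁ s).PosSemidef := by
    intro s t hs ht hst hts hpsd
    have hsub : Icc s t ⊆ Icc 0 T := Icc_subset_Icc hs.1 ht.2
    refine aux_step A (fun r => Γ₂ r - Γ₁ r) (fun r => Γ₂' r - Γ₁' r)
      (fun r => Q₂ r - Q₁ r) K hK s t hst hts (hA.mono hsub)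
      (fun r hr => hbound r (hsub hr)) (fun r hr => (hd₂ r (hsub hr)).sub (hd₁ r (hsub hr)))
      (fun r hr => hode r (hsub hr)) ?_ ((hΓ₂sym s hs).sub (hΓ₁sym s hs)) hpsd
    intro r hr v
    have := (hQle r (hsub hr)).dotProduct_mulVec_nonneg v
    rwa [star_trivial] at this
  have main : ∀ k : ℕ, ∀ s ∈ Icc 0 T, T - s ≤ k * δ → (Γ₂ s - Γ₁ s).PosSemidef := by
    intro k
    induction k with
    | zero =>
      intro s hs h0
      have hsT : s = T := by
        simp only [Nat.cast_zero, zero_mul] at h0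
        have := hs.2
        linarith
      rw [hsT, hterm₁, hterm₂]
      exact hGle
    | succ k ih =>
      intro s hs h
      by_cases hc : T - s ≤ k * δ
      · exact ih s hs hc
      · have hk0 : (0:ℝ) ≤ k * δ := by positivity
        set t : ℝ := min T (s + δ) with ht_def
        have hst : s ≤ t := le_min hs.2 (by linarith)
        have ht : t ∈ Icc 0 T := ⟨le_trans hs.1 hst, min_le_left _ _⟩
        have hts : t - s ≤ δ := by
          have := min_le_right T (s + δ)
          linarith
        have htk : T - t ≤ k * δ := by
          push_cast at h
          have h1 : T - (k:ℝ) * δ ≤ s + δ := by linarith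
          have h2 : T - (k:ℝ) * δ ≤ T := by linarith
          have := le_min h2 h1
          linarith [this]
        exact step s t hs ht hst hts (ih t ht htk)
  intro s hs
  obtain ⟨k, hk⟩ := exists_nat_ge ((T - s) / δ)
  refine main k s hs ?_
  rw [div_le_iff₀ hδ] at hk
  linarith
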